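/- arXiv:1306.3373 — 3 statements merged into one kernel-verified Lean document; each statement's English description precedes it below -/
import Mathlib

section
/- Let b < c be real numbers, f : ℝ → ℝ continuously differentiable, t₁,…,t_m fixed real numbers, and define X : (b,c) → ℝ^m by X(a) = (f(t₁ − a),…,f(t_m − a)). Assume the regularity condition: for every a ∈ (b,c) there exists j ∈ {1,…,m} with f'(t_j − a) ≠ 0. Define the geodesic distance along the curve, expressed in the parameter, by D(a₁,a₂) = |∫_{a₁}^{a₂} ‖X'(a)‖ da|. Let n = 2q+1 be odd and let a₁ ≤ a₂ ≤ … ≤ a_n be points of (b,c) listed in nondecreasing order, so that a_{q+1} is their empirical median. Then for every α ∈ (b,c), Σ_{i=1}^n D(a_i, α) ≥ Σ_{i=1}^n D(a_i, a_{q+1}); consequently the point X(a_{q+1}) = (f(t₁ − a_{q+1}),…,f(t_m − a_{q+1})), i.e. the template f shifted by the empirical median of the shifts, minimizes μ ↦ Σ_{i=1}^n δ(X(a_i), μ) over the curve {X(α) : α ∈ (b,c)}. -/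
/-- **Template estimation in the shift model.**
Let `f : ℝ → ℝ` be continuously differentiable, `t₁,…,t_m` fixed reals, and
`X a = (f (t₁ - a), …, f (t_m - a)) ∈ ℝ^m`.  Under the regularity condition
(for every `a ∈ (b,c)` some `deriv f (t j - a) ≠ 0`), the geodesic distance
along the curve, expressed in the parameter, is
`D a₁ a₂ = |∫_{a₁}^{a₂} ‖X'(a)‖ da|`.  For an odd sample `n = 2q+1` of
nondecreasing shifts `a₀ ≤ … ≤ a_{2q}` in `(b,c)`, the empirical median shift
`a q` minimizes `α ↦ Σᵢ D (a i) α` over `(b,c)`; i.e. the point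
`X (a q)` (the template shifted by the empirical median of the shifts)
minimizes `μ ↦ Σᵢ δ (X (a i)) μ` over the curve. -/
theorem template_shift_median_minimizes
    (m : ℕ) (f : ℝ → ℝ) (hf : ContDiff ℝ 1 f) (t : Fin m → ℝ)
    (b c : ℝ) (hbc : b < c)
    (X : ℝ → EuclideanSpace ℝ (Fin m))
    (hX : ∀ a : ℝ, ∀ j : Fin m, X a j = f (t j - a))
    (hreg : ∀ a ∈ Set.Ioo b c, ∃ j : Fin m, deriv f (t j - a) ≠ 0)
    (D : ℝ → ℝ → ℝ)
    (hD : ∀ a₁ a₂ : ℝ, D a₁ a₂ = |∫ s in a₁..a₂, ‖deriv X s‖|)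
    (q : ℕ) (a : Fin (2 * q + 1) → ℝ)
    (ha_mem : ∀ i, a i ∈ Set.Ioo b c)
    (ha_mono : Monotone a) :
    ∀ α ∈ Set.Ioo b c,
      ∑ i, D (a i) (a ⟨q, by omega⟩) ≤ ∑ i, D (a i) α := by
  intro α hα
  -- X is the explicit C¹ curve
  have hXfun : X = fun s => (WithLp.toLp 2 (fun j => f (t j - s)) : EuclideanSpace ℝ (Fin m)) := by
    funext s; ext j; exact hX s j
  have hXc : ContDiff ℝ 1 X := by
    rw [hXfun, contDiff_euclidean]
    intro j
    exact hf.comp (contDiff_const.sub contDiff_id)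
  have hcont : Continuous fun s => ‖deriv X s‖ :=
    (hXc.continuous_deriv le_rfl).norm
  set G : ℝ → ℝ := fun x => ∫ s in b..x, ‖deriv X s‖ with hGdef
  have hsub : ∀ x y : ℝ, G y - G x = ∫ s in x..y, ‖deriv X s‖ := by
    intro x y
    exact intervalIntegral.integral_interval_sub_left
      (hcont.intervalIntegrable _ _) (hcont.intervalIntegrable _ _)
  have hDG : ∀ a₁ a₂ : ℝ, D a₁ a₂ = |G a₂ - G a₁| := by
    intro a₁ a₂; rw [hD, hsub]
  have hGmono : Monotone G := by
    intro x y hxy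
    have h0 : 0 ≤ ∫ s in x..y, ‖deriv X s‖ :=
      intervalIntegral.integral_nonneg hxy fun s _ => norm_nonneg _
    have := hsub x y
    linarith
  set k : Fin (2 * q + 1) := ⟨q, by omega⟩ with hk
  set y : Fin (2 * q + 1) → ℝ := fun i => G (a i) with hy
  have hymono : Monotone y := hGmono.comp ha_mono
  have key : ∀ x : ℝ, ∑ i, |y i - y k| ≤ ∑ i, |y i - x| := by
    intro x
    have hterm : ∀ i : Fin (2 * q + 1),
        |y i - y k| + |y i.rev - y k| ≤ |y i - x| + |y i.rev - x| := by
      intro i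
      have hrev : (i.rev : ℕ) = 2 * q - (i : ℕ) := by
        simp [Fin.rev]
      rcases le_total (i : ℕ) q with h | h
      · have h1 : y i ≤ y k := hymono (by simpa [Fin.le_def, hk] using h)
        have h2 : y k ≤ y i.rev := hymono (by simp [Fin.le_def, hk, hrev]; omega)
        rcases abs_cases (y i - x) with ⟨e1, _⟩ | ⟨e1, _⟩ <;>
          rcases abs_cases (y i.rev - x) with ⟨e2, _⟩ | ⟨e2, _⟩ <;>
          rw [abs_of_nonpos (by linarith), abs_of_nonneg (by linarith)] <;> linarith
      · have h1 : y k ≤ y i := hymono (by simpa [Fin.le_def, hk] using h)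
        have h2 : y i.rev ≤ y k := hymono (by simp [Fin.le_def, hk, hrev]; omega)
        rcases abs_cases (y i - x) with ⟨e1, _⟩ | ⟨e1, _⟩ <;>
          rcases abs_cases (y i.rev - x) with ⟨e2, _⟩ | ⟨e2, _⟩ <;>
          rw [abs_of_nonneg (by linarith), abs_of_nonpos (by linarith)] <;> linarith
    have hrevsum : ∀ z : ℝ, ∑ i : Fin (2 * q + 1), |y i.rev - z| = ∑ i, |y i - z| := by
      intro z
      exact Fintype.sum_equiv Fin.revPerm _ _ fun i => rfl
    have hsum := Finset.sum_le_sum fun i (_ : i ∈ Finset.univ) => hterm i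
    rw [Finset.sum_add_distrib, Finset.sum_add_distrib, hrevsum, hrevsum] at hsum
    linarith
  calc ∑ i, D (a i) (a k) = ∑ i, |y i - y k| := by
        refine Finset.sum_congr rfl fun i _ => ?_
        rw [hDG, abs_sub_comm]
      _ ≤ ∑ i, |y i - G α| := key _
      _ = ∑ i, D (a i) α := by
        refine Finset.sum_congr rfl fun i _ => ?_
        rw [hDG, abs_sub_comm]
end

section
/- Let b < c be real numbers and g : (b,c) → ℝ a continuous function with g(a) > 0 for all a ∈ (b,c). Define D(a₁,a₂) = |∫_{a₁}^{a₂} g(a) da|. Let a₁ ≤ a₂ ≤ … ≤ a_n be points of (b,c) (n ≥ 1) and C(α) = Σ_{i=1}^n D(a_i, α). Then for every α ∈ (b,c) there exists an index i ∈ {1,…,n} with C(a_i) ≤ C(α); that is, the minimum of C over (b,c) is attained at one of the sample points. -/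
/-- The minimum of the Fréchet objective `C α = Σᵢ D (a i) α` over `(b,c)` is
attained at one of the sample points: for every `α ∈ (b,c)` there is a sample
index `i` with `C (a i) ≤ C α`. -/
theorem frechet_objective_minimized_at_sample_point
    (b c : ℝ) (hbc : b < c) (g : ℝ → ℝ)
    (hg_cont : ContinuousOn g (Set.Ioo b c))
    (hg_pos : ∀ x ∈ Set.Ioo b c, 0 < g x)
    (D : ℝ → ℝ → ℝ)
    (hD : ∀ a₁ a₂ : ℝ, D a₁ a₂ = |∫ s in a₁..a₂, g s|)
    (n : ℕ) (hn : 1 ≤ n) (a : Fin n → ℝ)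
    (ha_mem : ∀ i, a i ∈ Set.Ioo b c)
    (ha_mono : Monotone a)
    (C : ℝ → ℝ)
    (hC : ∀ α : ℝ, C α = ∑ i, D (a i) α) :
    ∀ α ∈ Set.Ioo b c, ∃ i : Fin n, C (a i) ≤ C α := by
  -- basic facts about D
  have hint : ∀ x ∈ Set.Ioo b c, ∀ y ∈ Set.Ioo b c, IntervalIntegrable g MeasureTheory.volume x y := by
    intro x hx y hy
    exact (hg_cont.mono (Set.ordConnected_Ioo.uIcc_subset hx hy)).intervalIntegrable
  have hDnn : ∀ x y, 0 ≤ D x y := by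
    intro x y; rw [hD]; exact abs_nonneg _
  have hDsymm : ∀ x y, D x y = D y x := by
    intro x y; rw [hD, hD, intervalIntegral.integral_symm, abs_neg]
  have hDle : ∀ x ∈ Set.Ioo b c, ∀ y ∈ Set.Ioo b c, x ≤ y → D x y = ∫ s in x..y, g s := by
    intro x hx y hy hxy
    rw [hD]
    refine abs_of_nonneg (intervalIntegral.integral_nonneg hxy ?_)
    intro u hu
    exact (hg_pos u ⟨lt_of_lt_of_le hx.1 hu.1, lt_of_le_of_lt hu.2 hy.2⟩).le
  have hadd : ∀ x ∈ Set.Ioo b c, ∀ y ∈ Set.Ioo b c, ∀ z ∈ Set.Ioo b c,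
      x ≤ y → y ≤ z → D x z = D x y + D y z := by
    intro x hx y hy z hz hxy hyz
    rw [hDle x hx z hz (hxy.trans hyz), hDle x hx y hy hxy, hDle y hy z hz hyz,
      intervalIntegral.integral_add_adjacent_intervals (hint x hx y hy) (hint y hy z hz)]
  intro α hα
  have hpos : 0 < n := hn
  set i0 : Fin n := ⟨0, hpos⟩ with hi0
  set last : Fin n := ⟨n - 1, Nat.sub_lt hpos one_pos⟩ with hlast
  by_cases h1 : α ≤ a i0
  · refine ⟨i0, ?_⟩
    rw [hC, hC]
    refine Finset.sum_le_sum fun i _ => ?_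
    have h01 : a i0 ≤ a i := ha_mono (by exact Fin.mk_le_of_le_val (Nat.zero_le _))
    have h2 := hadd α hα (a i0) (ha_mem _) (a i) (ha_mem _) h1 h01
    have h3 := hDsymm (a i) α
    have h4 := hDsymm (a i) (a i0)
    have h5 := hDnn α (a i0)
    linarith
  · by_cases h2 : a last ≤ α
    · refine ⟨last, ?_⟩
      rw [hC, hC]
      refine Finset.sum_le_sum fun i _ => ?_
      have h01 : a i ≤ a last := ha_mono (by
        change i.val ≤ n - 1
        omega)
      have h3 := hadd (a i) (ha_mem _) (a last) (ha_mem _) α hα h01 h2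
      have h5 := hDnn (a last) α
      linarith
    · -- middle case
      set S : Finset (Fin n) := Finset.univ.filter (fun i => a i ≤ α) with hS
      have hi0S : i0 ∈ S := by
        simp [hS, (not_le.mp h1).le]
      have hSne : S.Nonempty := ⟨i0, hi0S⟩
      set j : Fin n := S.max' hSne with hj
      have hjα : a j ≤ α := (Finset.mem_filter.mp (S.max'_mem hSne)).2
      have hjlt : j.val + 1 < n := by
        have h4 : j.val ≠ n - 1 := by
          intro h
          exact h2 (by
            have : j = last := Fin.ext h
            rw [← this]; exact hjα)
        have := j.isLt
        omega
      set k : Fin n := ⟨j.val + 1, hjlt⟩ with hk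
      have hαk : α ≤ a k := by
        by_contra h
        have hkS : k ∈ S := by simp [hS, (not_le.mp h).le]
        have := S.le_max' k hkS
        rw [← hj] at this
        have : j.val + 1 ≤ j.val := this
        omega
      have hjk : a j ≤ a k := hjα.trans hαk
      set d : ℝ := D (a j) α with hd
      set e : ℝ := D α (a k) with he
      have hd0 : 0 ≤ d := hDnn _ _
      have he0 : 0 ≤ e := hDnn _ _
      set s : Finset (Fin n) := Finset.univ.filter (fun i => i ≤ j) with hs
      set s' : Finset (Fin n) := Finset.univ.filter (fun i => ¬ i ≤ j) with hs'
      set A : ℝ := ∑ i ∈ s, D (a i) (a j) with hA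
      set B : ℝ := ∑ i ∈ s', D (a k) (a i) with hB
      set p : ℕ := s.card with hp
      set q : ℕ := s'.card with hq
      -- per-term facts
      have hle : ∀ i ∈ s, a i ≤ a j := by
        intro i hi
        exact ha_mono (Finset.mem_filter.mp hi).2
      have hge : ∀ i ∈ s', a k ≤ a i := by
        intro i hi
        refine ha_mono ?_
        have h4 : ¬ i ≤ j := (Finset.mem_filter.mp hi).2
        have h5 : j < i := not_le.mp h4
        change j.val + 1 ≤ i.val
        exact h5
      have splitsum : ∀ f : Fin n → ℝ, (∑ i, f i) = (∑ i ∈ s, f i) + (∑ i ∈ s', f i) := by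
        intro f
        rw [hs, hs', Finset.sum_filter_add_sum_filter_not]
      have t1 : ∀ i ∈ s, D (a i) α = D (a i) (a j) + d := fun i hi =>
        hadd (a i) (ha_mem _) (a j) (ha_mem _) α hα (hle i hi) hjα
      have t2 : ∀ i ∈ s', D (a i) α = e + D (a k) (a i) := by
        intro i hi
        rw [hDsymm (a i) α, hadd α hα (a k) (ha_mem _) (a i) (ha_mem _) hαk (hge i hi)]
      have hdejk : D (a j) (a k) = d + e :=
        hadd (a j) (ha_mem _) α hα (a k) (ha_mem _) hjα hαk
      have t3 : ∀ i ∈ s', D (a i) (a j) = d + (e + D (a k) (a i)) := by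
        intro i hi
        rw [hDsymm (a i) (a j),
          hadd (a j) (ha_mem _) α hα (a i) (ha_mem _) hjα (hαk.trans (hge i hi)),
          hadd α hα (a k) (ha_mem _) (a i) (ha_mem _) hαk (hge i hi)]
      have t4 : ∀ i ∈ s, D (a i) (a k) = D (a i) (a j) + (d + e) := by
        intro i hi
        rw [hadd (a i) (ha_mem _) (a j) (ha_mem _) (a k) (ha_mem _) (hle i hi) hjk, hdejk]
      have eCα : C α = (A + p * d) + (q * e + B) := by
        rw [hC, splitsum]
        congr 1
        · rw [Finset.sum_congr rfl t1, Finset.sum_add_distrib, Finset.sum_const,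
            nsmul_eq_mul, hA, hp]
        · rw [Finset.sum_congr rfl t2, Finset.sum_add_distrib, Finset.sum_const,
            nsmul_eq_mul, hB, hq]
      have eCj : C (a j) = A + (q * d + (q * e + B)) := by
        rw [hC, splitsum]
        congr 1
        rw [Finset.sum_congr rfl t3, Finset.sum_add_distrib, Finset.sum_const, nsmul_eq_mul,
          Finset.sum_add_distrib, Finset.sum_const, nsmul_eq_mul, hB, hq]
      have eCk : C (a k) = (A + p * (d + e)) + B := by
        rw [hC, splitsum]
        congr 1
        · rw [Finset.sum_congr rfl t4, Finset.sum_add_distrib, Finset.sum_const,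
            nsmul_eq_mul, hA, hp]
        · rw [hB]
          exact Finset.sum_congr rfl fun i _ => hDsymm _ _
      by_cases hpq : p ≤ q
      · refine ⟨k, ?_⟩
        have hpq' : (p : ℝ) ≤ q := Nat.cast_le.mpr hpq
        rw [eCα, eCk]
        nlinarith [mul_le_mul_of_nonneg_right hpq' he0]
      · refine ⟨j, ?_⟩
        have hpq' : (q : ℝ) ≤ p := Nat.cast_le.mpr (le_of_not_ge hpq)
        rw [eCα, eCj]
        nlinarith [mul_le_mul_of_nonneg_right hpq' hd0]
end

section
/- Let V be a finite type with at least two elements, let p : V → ℝ^m be injective, and let T be a connected simple graph on V. For each v ∈ V let ε_v be the maximum of ‖p(v) − p(w)‖ over all w adjacent to v in T (this maximum exists and is positive since T is connected on at least two vertices). Define the simple graph G′ on V by: v and w are adjacent in G′ if and only if v ≠ w and the closed segment {(1−λ)p(v) + λp(w) : λ ∈ [0,1]} is contained in ⋃_{z ∈ V} B(p(z), ε_z), where B denotes open balls. Then every edge of T is an edge of G′ (T is a subgraph of G′), and consequently G′ is connected. -/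
/-- **Connectedness of the robustified graph `G'`.**
Let `p : V → ℝ^m` be an injective embedding of a finite vertex set with at
least two elements, let `T` be a connected simple graph on `V`, and for each
`v` let `ε v` be the maximum of `‖p v - p w‖` over the `T`-neighbors `w` of
`v`.  Define `G'` by joining `v ≠ w` whenever the closed segment between
`p v` and `p w` is contained in `⋃ z, B(p z, ε z)` (open balls).  Then every
edge of `T` is an edge of `G'`, and consequently `G'` is connected. -/
theorem robustified_graph_contains_tree_and_connected
    (V : Type*) [Fintype V] [Nontrivial V] (m : ℕ)
    (p : V → EuclideanSpace ℝ (Fin m)) (hp : Function.Injective p)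
    (T : SimpleGraph V) (hT : T.Connected)
    (ε : V → ℝ)
    (hε : ∀ v : V, IsGreatest {d : ℝ | ∃ w : V, T.Adj v w ∧ d = ‖p v - p w‖} (ε v))
    (G' : SimpleGraph V)
    (hG' : ∀ v w : V, G'.Adj v w ↔
      v ≠ w ∧ segment ℝ (p v) (p w) ⊆ ⋃ z : V, Metric.ball (p z) (ε z)) :
    (∀ v w : V, T.Adj v w → G'.Adj v w) ∧ G'.Connected := by
  have key : ∀ v w : V, T.Adj v w → G'.Adj v w := by
    intro v w hvw
    have hne : v ≠ w := hvw.ne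
    have hd : (0 : ℝ) < ‖p v - p w‖ := by
      rw [norm_pos_iff, sub_ne_zero]
      exact fun h => hne (hp h)
    have hεv : ‖p v - p w‖ ≤ ε v := (hε v).2 ⟨w, hvw, rfl⟩
    have hεw : ‖p v - p w‖ ≤ ε w := by
      have := (hε w).2 ⟨v, hvw.symm, rfl⟩
      rwa [norm_sub_rev] at this
    rw [hG']
    refine ⟨hne, fun x hx => ?_⟩
    obtain ⟨a, b, ha, hb, hab, rfl⟩ := hx
    rcases le_or_gt b (1/2) with hb2 | hb2
    · refine Set.mem_iUnion.2 ⟨v, ?_⟩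
      have hx1 : a • p v + b • p w - p v = b • (p w - p v) := by
        have : a = 1 - b := by linarith
        rw [this]; module
      rw [Metric.mem_ball, dist_eq_norm, hx1, norm_smul, Real.norm_eq_abs,
        abs_of_nonneg hb, norm_sub_rev]
      calc b * ‖p v - p w‖ ≤ (1/2) * ‖p v - p w‖ := by nlinarith
        _ < ‖p v - p w‖ := by linarith
        _ ≤ ε v := hεv
    · refine Set.mem_iUnion.2 ⟨w, ?_⟩
      have ha2 : a < 1/2 := by linarith
      have hx1 : a • p v + b • p w - p w = a • (p v - p w) := by
        have : b = 1 - a := by linarith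
        rw [this]; module
      rw [Metric.mem_ball, dist_eq_norm, hx1, norm_smul, Real.norm_eq_abs,
        abs_of_nonneg ha]
      calc a * ‖p v - p w‖ ≤ (1/2) * ‖p v - p w‖ := by nlinarith
        _ < ‖p v - p w‖ := by linarith
        _ ≤ ε w := hεw
  exact ⟨key, hT.mono key⟩
end
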